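/- The clobber position oxoo is equivalent to the sum of the clobber positions xxo and xo, and its canonical form is {0, xo | 0}. -/

import Mathlib

/-! Combinatorial game theory (`SetTheory.PGame`) is no longer part of Mathlib; the
definitions used below are restated here with their old (Mathlib, December 2024) meaning. -/

universe u

namespace SetTheory

inductive PGame : Type (u + 1)
  | mk : ∀ α β : Type u, (α → PGame) → (β → PGame) → PGame

namespace PGame

/-- Given the IH for the options of `x`, computes `(x ≤ y, y ≤ x)` by recursion on `y`. -/
def leInner {xl xr : Type u} (ihL : xl → (PGame.{u} → Prop) × (PGame.{u} → Prop))
    (ihR : xr → (PGame.{u} → Prop) × (PGame.{u} → Prop)) : PGame.{u} → Prop × Prop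
  | mk yl yr yL yR =>
    ((∀ i, ¬ (ihL i).2 (mk yl yr yL yR)) ∧ ∀ j, ¬ (leInner ihL ihR (yR j)).2,
     (∀ i, ¬ (leInner ihL ihR (yL i)).1) ∧ ∀ j, ¬ (ihR j).1 (mk yl yr yL yR))

/-- `leAux x = (fun y => x ≤ y, fun y => y ≤ x)`. -/
def leAux : PGame.{u} → (PGame.{u} → Prop) × (PGame.{u} → Prop)
  | mk _ _ xL xR =>
    (fun y => (leInner (fun i => leAux (xL i)) (fun j => leAux (xR j)) y).1,
     fun y => (leInner (fun i => leAux (xL i)) (fun j => leAux (xR j)) y).2)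

/-- `x ≤ y` iff no left option of `x` is `≥ y` and no right option of `y` is `≤ x`. -/
instance : LE PGame.{u} := ⟨fun x y => (leAux x).1 y⟩

def Equiv (x y : PGame.{u}) : Prop := x ≤ y ∧ y ≤ x

instance : HasEquiv PGame.{u} := ⟨Equiv⟩

instance : Zero PGame.{u} := ⟨⟨PEmpty, PEmpty, PEmpty.elim, PEmpty.elim⟩⟩

def star : PGame.{u} := ⟨PUnit, PUnit, fun _ => 0, fun _ => 0⟩

/-- Given `x = mk xl xr xL xR` and the maps `y ↦ xL i + y`, `y ↦ xR j + y`, computes `x + y`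
by recursion on `y`. -/
def addInner {xl xr : Type u} (xL : xl → PGame.{u}) (xR : xr → PGame.{u})
    (ihL : xl → PGame.{u} → PGame.{u}) (ihR : xr → PGame.{u} → PGame.{u}) :
    PGame.{u} → PGame.{u}
  | mk yl yr yL yR =>
    mk (xl ⊕ yl) (xr ⊕ yr)
      (Sum.elim (fun i => ihL i (mk yl yr yL yR)) (fun i => addInner xL xR ihL ihR (yL i)))
      (Sum.elim (fun j => ihR j (mk yl yr yL yR)) (fun j => addInner xL xR ihL ihR (yR j)))

/-- The sum `x + y`: left options `xL i + y` and `x + yL i`, right options `xR j + y`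
and `x + yR j` (same as the old Mathlib definition). -/
def add : PGame.{u} → PGame.{u} → PGame.{u}
  | mk _ _ xL xR => addInner xL xR (fun i => add (xL i)) (fun j => add (xR j))

instance : Add PGame.{u} := ⟨add⟩

def ofLists (L R : List PGame.{u}) : PGame.{u} :=
  mk (ULift (Fin L.length)) (ULift (Fin R.length)) (fun i => L[i.down.1]) fun j => R[j.down.1]

end PGame

end SetTheory

open SetTheory PGame

inductive Cell | x | o | e
deriving DecidableEq

abbrev Pos := List Cell

/-- All positions reachable by one move of the player with stones `me`
clobbering an adjacent stone of the opponent `opp`. -/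
def movesAux (me opp : Cell) : Pos → List Pos
  | a :: b :: rest =>
      (if a = me ∧ b = opp then [Cell.e :: me :: rest] else []) ++
      (if a = opp ∧ b = me then [me :: Cell.e :: rest] else []) ++
      (movesAux me opp (b :: rest)).map (a :: ·)
  | _ => []

def leftMoves (p : Pos) : List Pos := movesAux Cell.x Cell.o p
def rightMoves (p : Pos) : List Pos := movesAux Cell.o Cell.x p

def stones (p : Pos) : Nat := p.countP (· != Cell.e)

/-- Game value of a clobber position, via fuel recursion (each move removes one stone). -/
def valueFuel : Nat → Pos → PGame
  | 0, _ => 0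
  | n+1, p => PGame.ofLists ((leftMoves p).map (valueFuel n)) ((rightMoves p).map (valueFuel n))

def value (p : Pos) : PGame := valueFuel (stones p) p

namespace OxooAux

theorem leAux_symm : ∀ x y : PGame.{u},
    ((leAux x).1 y ↔ (leAux y).2 x) ∧ ((leAux x).2 y ↔ (leAux y).1 x)
  | PGame.mk xl xr xL xR, y => by
    induction y with
    | mk yl yr yL yR ihL ihR =>
      constructor
      · show ((∀ i, ¬ (leAux (xL i)).2 (PGame.mk yl yr yL yR)) ∧
            ∀ j, ¬ (leAux (PGame.mk xl xr xL xR)).2 (yR j)) ↔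
          ((∀ i, ¬ (leAux (PGame.mk yl yr yL yR)).1 (xL i)) ∧
            ∀ j, ¬ (leAux (yR j)).1 (PGame.mk xl xr xL xR))
        exact and_congr (forall_congr' fun i => not_congr (leAux_symm (xL i) _).2)
          (forall_congr' fun j => not_congr (ihR j).2)
      · show ((∀ i, ¬ (leAux (PGame.mk xl xr xL xR)).1 (yL i)) ∧
            ∀ j, ¬ (leAux (xR j)).1 (PGame.mk yl yr yL yR)) ↔
          ((∀ i, ¬ (leAux (yL i)).2 (PGame.mk xl xr xL xR)) ∧
            ∀ j, ¬ (leAux (PGame.mk yl yr yL yR)).2 (xR j))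
        exact and_congr (forall_congr' fun i => not_congr (ihL i).1)
          (forall_congr' fun j => not_congr (leAux_symm (xR j) _).1)

theorem mk_le_mk {xl xr yl yr : Type u} {xL : xl → PGame.{u}} {xR : xr → PGame.{u}}
    {yL : yl → PGame.{u}} {yR : yr → PGame.{u}} :
    PGame.mk xl xr xL xR ≤ PGame.mk yl yr yL yR ↔
      (∀ i, ¬ PGame.mk yl yr yL yR ≤ xL i) ∧ ∀ j, ¬ yR j ≤ PGame.mk xl xr xL xR := by
  show ((∀ i, ¬ (leAux (xL i)).2 (PGame.mk yl yr yL yR)) ∧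
      ∀ j, ¬ (leAux (PGame.mk xl xr xL xR)).2 (yR j)) ↔ _
  exact and_congr (forall_congr' fun i => not_congr (leAux_symm _ _).2)
    (forall_congr' fun j => not_congr (leAux_symm _ _).2)

theorem zero_def : (0 : PGame.{u}) = PGame.mk PEmpty PEmpty PEmpty.elim PEmpty.elim := rfl

theorem add_def (x y : PGame.{u}) : x + y = PGame.add x y := rfl

theorem star_def : (star : PGame.{u}) = PGame.mk PUnit PUnit (fun _ => 0) (fun _ => 0) := rfl

theorem equiv_def (x y : PGame.{u}) : x ≈ y ↔ x ≤ y ∧ y ≤ x := Iff.rfl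

end OxooAux

open OxooAux in
/-- The clobber position `oxoo` is equivalent to `xxo + xo`, and its canonical form is
`{0, xo | 0}` (with `xo = *`). -/
theorem oxoo_equiv :
    value [Cell.o, Cell.x, Cell.o, Cell.o] ≈
      value [Cell.x, Cell.x, Cell.o] + value [Cell.x, Cell.o] ∧
    value [Cell.o, Cell.x, Cell.o, Cell.o] ≈ PGame.ofLists [0, star] [0] := by
  show valueFuel 4 [Cell.o, Cell.x, Cell.o, Cell.o] ≈
      valueFuel 3 [Cell.x, Cell.x, Cell.o] + valueFuel 2 [Cell.x, Cell.o] ∧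
    valueFuel 4 [Cell.o, Cell.x, Cell.o, Cell.o] ≈ PGame.ofLists [0, star] [0]
  unfold valueFuel
  simp only [leftMoves, rightMoves, movesAux, reduceCtorEq, and_false, false_and, and_self, if_true, if_false, List.nil_append, List.append_nil, List.cons_append, List.map_cons, List.map_nil]
  unfold valueFuel
  simp only [leftMoves, rightMoves, movesAux, reduceCtorEq, and_false, false_and, and_self, if_true, if_false, List.nil_append, List.append_nil, List.cons_append, List.map_cons, List.map_nil]
  unfold valueFuel
  simp only [leftMoves, rightMoves, movesAux, reduceCtorEq, and_false, false_and, and_self, if_true, if_false, List.nil_append, List.append_nil, List.cons_append, List.map_cons, List.map_nil]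
  simp only [equiv_def, PGame.ofLists, star_def, zero_def,
    add_def, PGame.add, PGame.addInner, mk_le_mk, ULift.forall, Fin.forall_fin_succ, Fin.forall_fin_zero_pi, Sum.forall, Sum.elim_inl, Sum.elim_inr, IsEmpty.forall_iff, List.getElem_cons_zero, List.getElem_cons_succ, List.length_cons, List.length_nil]
  simp [mk_le_mk, ULift.forall, Sum.forall, Fin.forall_fin_succ, add_def, PGame.add, PGame.addInner, zero_def, star_def]
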